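/- Let χ_p^q ∈ Z^N (N = 2^n - 2, coordinates indexed by proper nonempty subsets X ⊂ {1,...,n}) be defined by (χ_p^q)_X = 1 if X contains at least p indices that are ≤ q, and 0 otherwise. For fixed i < j < x and X ⊂ {j+2,...,n} \ {x}, let v = e_{{1..i-1}∪{i}∪X} - e_{{1..i-1}∪{j}∪X} - e_{{1..i-1}∪{i,x}∪X} + e_{{1..i-1}∪{j,x}∪X}. Then ⟨χ_p^q, v⟩ = 0 for all 1 ≤ p ≤ q ≤ n. -/
import Mathlib


/-- The set of column indices `{1, …, i-1}` (0-based: all indices `< i`). -/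
def lowSet {n : ℕ} (i : Fin n) : Finset (Fin n) :=
  Finset.univ.filter (fun y => y < i)

lemma cnt_insert {n : ℕ} (q : ℕ) (y : Fin n) (S : Finset (Fin n)) (hy : y ∉ S) :
    ((insert y S).filter (fun z : Fin n => (z : ℕ) < q)).card
      = (S.filter (fun z : Fin n => (z : ℕ) < q)).card
        + (if (y : ℕ) < q then 1 else 0) := by
  rw [Finset.filter_insert]
  split_ifs with h
  · rw [Finset.card_insert_of_notMem (fun hm => hy (Finset.mem_of_mem_filter _ hm))]
  · simp

/-- The functionals `χ_p^q` (with `(χ_p^q)_S = 1` iff `S` contains at least `p` indices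
that are `≤ q`, in 1-based counting, i.e. at least `p` elements of value `< q` in
0-based counting) vanish on the vector
`v = e_{{1..i-1}∪{i}∪X} - e_{{1..i-1}∪{j}∪X} - e_{{1..i-1}∪{i,x}∪X} + e_{{1..i-1}∪{j,x}∪X}`
for `i < j < x` and `X ⊂ {j+2,…,n} \ {x}`. The inner product is the standard one on the
coordinates indexed by proper nonempty subsets of `{1,…,n}`; since `v` is supported on
proper nonempty subsets, the sum may be taken over all subsets. -/
theorem stmt_16 (n : ℕ) (i j x : Fin n) (hij : i < j) (hjx : j < x)
    (Xc : Finset (Fin n)) (hXc : ∀ y ∈ Xc, (j : ℕ) + 2 ≤ (y : ℕ)) (hx : x ∉ Xc)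
    (p q : ℕ) (hp : 1 ≤ p) (hpq : p ≤ q) (hq : q ≤ n) :
    ∑ S : Finset (Fin n),
      (if p ≤ (S.filter (fun y : Fin n => (y : ℕ) < q)).card then (1 : ℤ) else 0) *
        ((if S = insert i (lowSet i ∪ Xc) then 1 else 0) -
          (if S = insert j (lowSet i ∪ Xc) then 1 else 0) -
          (if S = insert i (insert x (lowSet i ∪ Xc)) then 1 else 0) +
          (if S = insert j (insert x (lowSet i ∪ Xc)) then 1 else 0)) = 0 := by
  set A : Finset (Fin n) := lowSet i ∪ Xc with hA
  have memA : ∀ y : Fin n, y ∈ A ↔ (y < i ∨ y ∈ Xc) := by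
    intro y; simp [hA, lowSet]
  have hiA : i ∉ A := by
    rw [memA]
    rintro (h | h)
    · exact lt_irrefl _ h
    · have := hXc i h; omega
  have hjA : j ∉ A := by
    rw [memA]
    rintro (h | h)
    · exact absurd (h.trans hij) (lt_irrefl _)
    · have := hXc j h; omega
  have hxA : x ∉ A := by
    rw [memA]
    rintro (h | h)
    · exact absurd (h.trans (hij.trans hjx)) (lt_irrefl _)
    · exact hx h
  have hix : i ≠ x := Fin.ne_of_lt (hij.trans hjx)
  have hjx' : j ≠ x := Fin.ne_of_lt hjx
  have key : ∀ S0 : Finset (Fin n),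
      ∑ S : Finset (Fin n),
        (if p ≤ (S.filter (fun y : Fin n => (y : ℕ) < q)).card then (1 : ℤ) else 0) *
          (if S = S0 then 1 else 0)
      = (if p ≤ (S0.filter (fun y : Fin n => (y : ℕ) < q)).card then (1 : ℤ) else 0) := by
    intro S0
    rw [Finset.sum_eq_single S0]
    · simp
    · intro b _ hb; simp [hb]
    · intro h; exact absurd (Finset.mem_univ S0) h
  simp only [mul_sub, mul_add, Finset.sum_sub_distrib, Finset.sum_add_distrib, key]
  have c1 := cnt_insert q i A hiA
  have c2 := cnt_insert q j A hjA
  have c3 := cnt_insert q i (insert x A) (by simp [hix, hiA])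
  have c4 := cnt_insert q j (insert x A) (by simp [hjx', hjA])
  have cx := cnt_insert q x A hxA
  rw [c1, c2, c3, c4, cx]
  have h1 : (i : ℕ) < (j : ℕ) := hij
  have h2 : (j : ℕ) < (x : ℕ) := hjx
  split_ifs <;> omega
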